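/- For q ∈ (G, 2), where G = (1+√5)/2: q ∈ B_2 if and only if q/(q-1) ∈ U_q + U_q, i.e., if and only if there exist y, z ∈ U_q with y + z = q/(q-1). -/

import Mathlib

noncomputable section

/-- `a` is an expansion of `x` in base `q`: all digits `a n` lie in `{0,1}` and
`x = Σ_{n≥1} a_n q^{-n}` (here `a n` is the `(n+1)`-st digit, i.e. indexing is 0-based). -/
def IsExpansion (q x : ℝ) (a : ℕ → ℕ) : Prop :=
  (∀ n, a n ≤ 1) ∧ x = ∑' n : ℕ, (a n : ℝ) / q ^ (n + 1)

/-- The set of expansions of `x` in base `q`. -/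
def expansionsOf (q x : ℝ) : Set (ℕ → ℕ) := {a | IsExpansion q x a}

/-- `U_q`: the set of `x ∈ [0, 1/(q-1)]` having a unique expansion in base `q`. -/
def uniqueExpansionSet (q : ℝ) : Set ℝ :=
  {x | x ∈ Set.Icc 0 (1 / (q - 1)) ∧ ∃! a, IsExpansion q x a}

/-- `B_m` (for finite `m`): bases `q ∈ (G, 2)` for which some `x ∈ I_q` has exactly `m`
expansions in base `q`. -/
def B (m : ℕ) : Set ℝ :=
  {q | q ∈ Set.Ioo ((1 + Real.sqrt 5) / 2) 2 ∧
    ∃ x ∈ Set.Icc (0:ℝ) (1 / (q - 1)), Cardinal.mk (expansionsOf q x) = m}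

/-- `B_{ℵ₀}`: bases `q ∈ (G, 2)` for which some `x ∈ I_q` has exactly countably infinitely
many expansions in base `q`. -/
def Baleph0 : Set ℝ :=
  {q | q ∈ Set.Ioo ((1 + Real.sqrt 5) / 2) 2 ∧
    ∃ x ∈ Set.Icc (0:ℝ) (1 / (q - 1)), Cardinal.mk (expansionsOf q x) = Cardinal.aleph0}

/-- The Thue–Morse sequence: `thueMorse n` is the parity of the number of 1s in the
binary expansion of `n`. -/
def thueMorse (n : ℕ) : ℕ := ((Nat.digits 2 n).count 1) % 2

/-- A digit `a m` of an expansion of `x` in base `q` is forced if every expansion of `x`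
agreeing with `a` before position `m` also agrees at position `m`. -/
def Forced (q x : ℝ) (a : ℕ → ℕ) (m : ℕ) : Prop :=
  ∀ c : ℕ → ℕ, IsExpansion q x c → (∀ i < m, c i = a i) → c m = a m

namespace Stmt15Aux

lemma summable_exp {q : ℝ} (hq1 : 1 < q) {a : ℕ → ℕ} (ha : ∀ n, a n ≤ 1) :
    Summable (fun n => (a n : ℝ) / q ^ (n + 1)) := by
  have hq0 : (0:ℝ) < q := lt_trans one_pos hq1
  have h1 : (1:ℝ)/q < 1 := by rw [div_lt_one hq0]; exact hq1
  refine Summable.of_nonneg_of_le (fun n => by positivity) (fun n => ?_)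
    (summable_geometric_of_lt_one (by positivity) h1)
  have h2 : ((1:ℝ)/q)^n = 1/q^n := by rw [div_pow, one_pow]
  rw [h2]
  calc (a n : ℝ)/q^(n+1) ≤ 1/q^(n+1) := by
        gcongr
        exact_mod_cast ha n
    _ ≤ 1/q^n := by
        gcongr
        · exact hq1.le
        · omega

lemma tsum_one_exp {q : ℝ} (hq1 : 1 < q) : ∑' n : ℕ, (1:ℝ) / q ^ (n + 1) = 1/(q-1) := by
  have hq0 : (0:ℝ) < q := lt_trans one_pos hq1
  have h1 : (1:ℝ)/q < 1 := by rw [div_lt_one hq0]; exact hq1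
  have h2 : ∀ n : ℕ, (1:ℝ)/q^(n+1) = (1/q) * (1/q)^n := by
    intro n
    rw [div_pow, one_pow, pow_succ]
    ring
  rw [tsum_congr h2, tsum_mul_left, tsum_geometric_of_lt_one (by positivity) h1]
  rw [one_div, one_div]
  rw [eq_comm, inv_eq_iff_eq_inv, eq_comm]
  field_simp

lemma exp_split {q : ℝ} (hq1 : 1 < q) {a : ℕ → ℕ} (ha : ∀ n, a n ≤ 1) (k : ℕ) :
    ∑' n : ℕ, (a n : ℝ) / q ^ (n + 1) =
      (∑ i ∈ Finset.range k, (a i : ℝ) / q ^ (i + 1)) +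
        (1/q^k) * ∑' n : ℕ, (a (n + k) : ℝ) / q ^ (n + 1) := by
  have hq0 : (0:ℝ) < q := lt_trans one_pos hq1
  rw [← Summable.sum_add_tsum_nat_add k (summable_exp hq1 ha)]
  congr 1
  have h3 : ∀ n : ℕ, (a (n + k) : ℝ) / q ^ (n + k + 1) =
      (1/q^k) * ((a (n + k) : ℝ) / q ^ (n + 1)) := by
    intro n
    have : q ^ (n + k + 1) = q ^ k * q ^ (n + 1) := by ring
    rw [this]
    field_simp
  rw [tsum_congr h3, tsum_mul_left]


lemma summable_one {q : ℝ} (hq1 : 1 < q) : Summable (fun n : ℕ => (1:ℝ)/q^(n+1)) := by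
  simpa using summable_exp hq1 (a := fun _ => 1) (fun _ => le_refl 1)

lemma exp_mem {q x : ℝ} {a : ℕ → ℕ} (hq1 : 1 < q) (h : IsExpansion q x a) :
    x ∈ Set.Icc (0:ℝ) (1/(q-1)) := by
  obtain ⟨ha, hx⟩ := h
  have hq0 : (0:ℝ) < q := lt_trans one_pos hq1
  constructor
  · rw [hx]
    exact tsum_nonneg (fun n => by positivity)
  · rw [hx, ← tsum_one_exp hq1]
    refine Summable.tsum_le_tsum (fun n => ?_) (summable_exp hq1 ha) (summable_one hq1)
    gcongr
    exact_mod_cast ha n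

/-- The tail of an expansion is an expansion of its own value. -/
lemma exp_tail {q : ℝ} {a : ℕ → ℕ} (ha : ∀ n, a n ≤ 1) (k : ℕ) :
    IsExpansion q (∑' n : ℕ, (a (n + k) : ℝ) / q ^ (n + 1)) (fun n => a (n + k)) :=
  ⟨fun n => ha _, rfl⟩

lemma exp_reflect {q x : ℝ} {a : ℕ → ℕ} (hq1 : 1 < q) (h : IsExpansion q x a) :
    IsExpansion q (1/(q-1) - x) (fun n => 1 - a n) := by
  obtain ⟨ha, hx⟩ := h
  refine ⟨fun n => Nat.sub_le 1 (a n), ?_⟩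
  have hcast : ∀ n : ℕ, ((1 - a n : ℕ) : ℝ) / q ^ (n+1)
      = (1:ℝ)/q^(n+1) - (a n : ℝ)/q^(n+1) := by
    intro n
    rw [Nat.cast_sub (ha n)]
    push_cast
    ring
  rw [tsum_congr hcast, Summable.tsum_sub (summable_one hq1) (summable_exp hq1 ha),
    tsum_one_exp hq1, hx]

lemma mem_U_reflect {q x : ℝ} (hq1 : 1 < q) (h : x ∈ uniqueExpansionSet q) :
    1/(q-1) - x ∈ uniqueExpansionSet q := by
  obtain ⟨⟨hx0, hx1⟩, a, ha, hun⟩ := h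
  refine ⟨⟨by linarith, by linarith⟩, ⟨fun n => 1 - a n, exp_reflect hq1 ⟨ha.1, ha.2⟩, ?_⟩⟩
  intro c hc
  have hrc := exp_reflect hq1 hc
  have hval : 1/(q-1) - (1/(q-1) - x) = x := by ring
  rw [hval] at hrc
  have heq := hun _ hrc
  funext n
  have h1 : 1 - c n = a n := congrFun heq n
  show c n = 1 - a n
  have := hc.1 n
  omega

/-- Extend an expansion of the tail value back to an expansion of `x`. -/
lemma exp_prefix {q x : ℝ} {a : ℕ → ℕ} (hq1 : 1 < q) (h : IsExpansion q x a) (k : ℕ)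
    {c : ℕ → ℕ} (hc : IsExpansion q (∑' n : ℕ, (a (n + k) : ℝ) / q ^ (n + 1)) c) :
    IsExpansion q x (fun n => if n < k then a n else c (n - k)) := by
  obtain ⟨ha, hx⟩ := h
  obtain ⟨hc1, hc2⟩ := hc
  have hd : ∀ n, (if n < k then a n else c (n - k)) ≤ 1 := by
    intro n; split <;> [exact ha n; exact hc1 _]
  refine ⟨hd, ?_⟩
  rw [exp_split hq1 hd k, hx, exp_split hq1 ha k]
  congr 1
  · exact Finset.sum_congr rfl (fun i hi => by
      rw [if_pos (Finset.mem_range.mp hi)])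
  · congr 1
    rw [hc2]
    exact tsum_congr (fun n => by
      rw [if_neg (by omega : ¬ n + k < k), Nat.add_sub_cancel])

/-- If two expansions of `x` agree below `m`, with digits `1` and `0` at `m`, then
the tail values satisfy `Z = 1 + Y`. -/
lemma tail_relation {q x : ℝ} {a b : ℕ → ℕ} (hq1 : 1 < q)
    (ha : IsExpansion q x a) (hb : IsExpansion q x b) (m : ℕ)
    (hagree : ∀ i < m, a i = b i) (ham : a m = 1) (hbm : b m = 0) :
    (∑' n : ℕ, (b (n + (m+1)) : ℝ) / q ^ (n + 1)) =
      1 + ∑' n : ℕ, (a (n + (m+1)) : ℝ) / q ^ (n + 1) := by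
  have hq0 : (0:ℝ) < q := lt_trans one_pos hq1
  have hA := ha.2; rw [exp_split hq1 ha.1 (m+1)] at hA
  have hB := hb.2; rw [exp_split hq1 hb.1 (m+1)] at hB
  set Y := ∑' n : ℕ, (a (n + (m+1)) : ℝ) / q ^ (n + 1)
  set Z := ∑' n : ℕ, (b (n + (m+1)) : ℝ) / q ^ (n + 1)
  have hsum : (∑ i ∈ Finset.range (m+1), (a i : ℝ) / q ^ (i + 1)) =
      (∑ i ∈ Finset.range (m+1), (b i : ℝ) / q ^ (i + 1)) + 1 / q ^ (m+1) := by
    rw [Finset.sum_range_succ, Finset.sum_range_succ, ham, hbm]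
    rw [Finset.sum_congr rfl (fun i hi => by
      rw [hagree i (Finset.mem_range.mp hi)])]
    push_cast
    ring
  have hqk : (0:ℝ) < q ^ (m+1) := by positivity
  have h : (∑ i ∈ Finset.range (m+1), (a i : ℝ) / q ^ (i + 1)) + (1/q^(m+1)) * Y
      = (∑ i ∈ Finset.range (m+1), (b i : ℝ) / q ^ (i + 1)) + (1/q^(m+1)) * Z := by
    rw [← hA, ← hB]
  rw [hsum] at h
  have key : (1/q^(m+1)) * (1 + Y) = (1/q^(m+1)) * Z := by linear_combination h
  exact (mul_left_cancel₀ (by positivity) key).symm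

/-- Core of the forward direction. -/
lemma forward_core {q x : ℝ} (hq1 : 1 < q) {a b : ℕ → ℕ}
    (ha : IsExpansion q x a) (hb : IsExpansion q x b) (m : ℕ)
    (hagree : ∀ i < m, a i = b i) (ham : a m = 1) (hbm : b m = 0)
    (hall : ∀ c, IsExpansion q x c → c = a ∨ c = b) :
    ∃ y ∈ uniqueExpansionSet q, ∃ z ∈ uniqueExpansionSet q, y + z = q/(q-1) := by
  have hq0 : (0:ℝ) < q := lt_trans one_pos hq1
  set Y := ∑' n : ℕ, (a (n + (m+1)) : ℝ) / q ^ (n + 1) with hYdef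
  set Z := ∑' n : ℕ, (b (n + (m+1)) : ℝ) / q ^ (n + 1) with hZdef
  have hZY : Z = 1 + Y := tail_relation hq1 ha hb m hagree ham hbm
  -- Y ∈ U_q
  have hYU : Y ∈ uniqueExpansionSet q := by
    refine ⟨exp_mem hq1 (exp_tail ha.1 (m+1)), ⟨fun n => a (n + (m+1)), exp_tail ha.1 (m+1), ?_⟩⟩
    intro c hc
    have hext := exp_prefix hq1 ha (m+1) hc
    rcases hall _ hext with hca | hcb
    · funext n
      have h1 := congrFun hca (n + (m+1))
      simp only [if_neg (by omega : ¬ n + (m+1) < m+1)] at h1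
      simpa [Nat.add_sub_cancel] using h1
    · exfalso
      have h1 := congrFun hcb m
      simp only [if_pos (by omega : m < m+1)] at h1
      omega
  have hZU : Z ∈ uniqueExpansionSet q := by
    refine ⟨exp_mem hq1 (exp_tail hb.1 (m+1)), ⟨fun n => b (n + (m+1)), exp_tail hb.1 (m+1), ?_⟩⟩
    intro c hc
    have hext := exp_prefix hq1 hb (m+1) hc
    have hbext : IsExpansion q x fun n => if n < m + 1 then b n else c (n - (m + 1)) := by
      have := hext
      refine ⟨this.1, ?_⟩
      exact this.2
    rcases hall _ hbext with hca | hcb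
    · exfalso
      have h1 := congrFun hca m
      simp only [if_pos (by omega : m < m+1)] at h1
      omega
    · funext n
      have h1 := congrFun hcb (n + (m+1))
      simp only [if_neg (by omega : ¬ n + (m+1) < m+1)] at h1
      simpa [Nat.add_sub_cancel] using h1
  refine ⟨1/(q-1) - Y, mem_U_reflect hq1 hYU, Z, hZU, ?_⟩
  have hq1' : q - 1 ≠ 0 := by linarith
  rw [hZY]
  field_simp
  ring

theorem stmt15 (q : ℝ) (hq : q ∈ Set.Ioo ((1 + Real.sqrt 5) / 2) 2) :
    q ∈ B 2 ↔
      ∃ y ∈ uniqueExpansionSet q, ∃ z ∈ uniqueExpansionSet q, y + z = q / (q - 1) := by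
  have hs5 : (2:ℝ) < Real.sqrt 5 := by
    rw [show (2:ℝ) = Real.sqrt 4 by rw [show (4:ℝ) = 2^2 by norm_num, Real.sqrt_sq]; norm_num]
    exact Real.sqrt_lt_sqrt (by norm_num) (by norm_num)
  have hq1 : 1 < q := by
    have := hq.1
    nlinarith [Real.sq_sqrt (by norm_num : (5:ℝ) ≥ 0)]
  have hq0 : (0:ℝ) < q := lt_trans one_pos hq1
  have hq1' : (0:ℝ) < q - 1 := by linarith
  constructor
  · -- forward
    rintro ⟨-, x, hxI, hcard⟩
    rw [show ((2:ℕ) : Cardinal) = 2 by norm_num, Cardinal.mk_eq_two_iff] at hcard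
    obtain ⟨⟨a, haS⟩, ⟨b, hbS⟩, hab, huniv⟩ := hcard
    have hane : a ≠ b := fun h => hab (Subtype.ext h)
    have hall : ∀ c, IsExpansion q x c → c = a ∨ c = b := by
      intro c hc
      have : (⟨c, hc⟩ : expansionsOf q x) ∈ (Set.univ : Set (expansionsOf q x)) := trivial
      rw [← huniv] at this
      rcases this with h | h
      · exact Or.inl (congrArg Subtype.val h)
      · exact Or.inr (congrArg Subtype.val h)
    have hex : ∃ n, a n ≠ b n := Function.ne_iff.mp hane
    set m := Nat.find hex with hm
    have hne : a m ≠ b m := Nat.find_spec hex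
    have hagree : ∀ i < m, a i = b i := fun i hi => by
      have := Nat.find_min hex (hm ▸ hi)
      exact not_not.mp this
    have ha1 := haS.1 m
    have hb1 := hbS.1 m
    rcases (by omega : (a m = 1 ∧ b m = 0) ∨ (a m = 0 ∧ b m = 1)) with ⟨h1, h2⟩ | ⟨h1, h2⟩
    · exact forward_core hq1 haS hbS m hagree h1 h2 hall
    · exact forward_core hq1 hbS haS m (fun i hi => (hagree i hi).symm) h2 h1
        (fun c hc => (hall c hc).symm)
  · -- backward
    rintro ⟨y, hyU, z, hzU, hyz⟩
    set w := 1/(q-1) - y with hwdef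
    have hwU : w ∈ uniqueExpansionSet q := mem_U_reflect hq1 hyU
    have hzw : z = 1 + w := by
      rw [hwdef]
      have : q / (q-1) = 1 + 1/(q-1) := by field_simp; ring
      linarith [hyz, this]
    obtain ⟨⟨hw0, hw1⟩, aw, haw, hawu⟩ := hwU
    obtain ⟨⟨hz0, hz1⟩, az, haz, hazu⟩ := hzU
    set x := z / q with hxdef
    have hxI : x ∈ Set.Icc (0:ℝ) (1/(q-1)) := by
      constructor
      · positivity
      · rw [hxdef, div_le_iff₀ hq0]
        nlinarith
    -- the two expansions
    set A : ℕ → ℕ := fun n => match n with | 0 => 0 | (k+1) => az k with hAdef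
    set B' : ℕ → ℕ := fun n => match n with | 0 => 1 | (k+1) => aw k with hBdef
    have consval : ∀ (d : ℕ) (c : ℕ → ℕ), (∀ n, c n ≤ 1) → d ≤ 1 →
        IsExpansion q (((d:ℝ) + ∑' n : ℕ, (c n : ℝ)/q^(n+1)) / q)
          (fun n => match n with | 0 => d | (k+1) => c k) := by
      intro d c hc hd
      have hdig : ∀ n, (fun n => match n with | 0 => d | (k+1) => c k) n ≤ 1 := by
        intro n; cases n with
        | zero => exact hd
        | succ k => exact hc k
      refine ⟨hdig, ?_⟩
      rw [exp_split hq1 hdig 1]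
      simp only [Finset.sum_range_one, pow_one]
      have : (fun n : ℕ => ((match n + 1 with | 0 => d | (k+1) => c k : ℕ) : ℝ) / q^(n+1))
          = fun n : ℕ => (c n : ℝ)/q^(n+1) := by
        funext n; rfl
      rw [this]
      field_simp
      ring
    have hAx : IsExpansion q x A := by
      have := consval 0 az haz.1 (by norm_num)
      rw [← haz.2] at this
      simpa [hAdef, hxdef] using this
    have hBx : IsExpansion q x B' := by
      have := consval 1 aw haw.1 (le_refl 1)
      rw [← haw.2] at this
      have h1 : ((1:ℕ):ℝ) + w = z := by rw [hzw]; push_cast; ring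
      rw [h1] at this
      exact this
    have hAB : A ≠ B' := by
      intro h
      have := congrFun h 0
      simp [hAdef, hBdef] at this
    have hset : expansionsOf q x = {A, B'} := by
      ext c
      constructor
      · intro hc
        obtain ⟨hc1, hc2⟩ := hc
        -- tail of c is expansion of q*x - c 0 = z - c 0
        have hsplit := hc2
        rw [exp_split hq1 hc1 1] at hsplit
        simp only [Finset.sum_range_one, pow_one] at hsplit
        have htail : (∑' n : ℕ, (c (n+1) : ℝ)/q^(n+1)) = z - c 0 := by
          have hq0' : q ≠ 0 := ne_of_gt hq0
          have hx' : q * x = z := by rw [hxdef]; field_simp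
          have : q * x = (c 0 : ℝ) + ∑' n : ℕ, (c (n+1) : ℝ)/q^(n+1) := by
            rw [hsplit]; field_simp; ring
          linarith [hx' ▸ this]
        have hc0 := hc1 0
        rcases (by omega : c 0 = 0 ∨ c 0 = 1) with h0 | h0
        · left
          have : IsExpansion q z (fun n => c (n+1)) := by
            refine ⟨fun n => hc1 _, ?_⟩
            rw [htail, h0]; push_cast; ring
          have hceq := hazu _ this
          funext n
          cases n with
          | zero => simpa [hAdef] using h0
          | succ k => simpa [hAdef] using congrFun hceq k
        · right
          have : IsExpansion q w (fun n => c (n+1)) := by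
            refine ⟨fun n => hc1 _, ?_⟩
            rw [htail, h0, hzw]
            push_cast
            linarith [hzw]
          have hceq := hawu _ this
          funext n
          cases n with
          | zero => simpa [hBdef] using h0
          | succ k => simpa [hBdef] using congrFun hceq k
      · intro hc
        rcases hc with h | h
        · rw [h]; exact hAx
        · rw [h]; exact hBx
    refine ⟨hq, x, hxI, ?_⟩
    rw [hset]
    rw [show ((2:ℕ) : Cardinal) = 1 + 1 by norm_num]
    rw [Cardinal.mk_insert (by simpa using hAB), Cardinal.mk_singleton]
end Stmt15Aux

theorem stmt15 (q : ℝ) (hq : q ∈ Set.Ioo ((1 + Real.sqrt 5) / 2) 2) :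
    q ∈ B 2 ↔
      ∃ y ∈ uniqueExpansionSet q, ∃ z ∈ uniqueExpansionSet q, y + z = q / (q - 1) :=
  Stmt15Aux.stmt15 q hq
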